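/- Let ξ and η be invariant random measures on ℝ and set S₁(ω) := 1 + ξ^d(ω,[0,1)) + η^d(ω,[0,1)). Then the pair (θ_{S₁}ξ*, θ_{S₁}η*) := (ξ*(· + S₁), η*(· + S₁)) has the same distribution under P as (ξ*, η*); that is, for every measurable f : M(ℝ) × M(ℝ) → [0,∞], E f(θ_{S₁}ξ*, θ_{S₁}η*) = E f(ξ*, η*). -/

import Mathlib

open MeasureTheory

/-- The purely atomic part `μ^d` of a measure on `ℝ`. -/
noncomputable def atomicPart (μ : Measure ℝ) : Measure ℝ :=
  μ.restrict {t : ℝ | μ {t} ≠ 0}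

/-- The diffuse part `μ^c` of a measure on `ℝ`. -/
noncomputable def diffusePart (μ : Measure ℝ) : Measure ℝ :=
  μ.restrict {t : ℝ | μ {t} = 0}

/-- The time change `ζ`. -/
noncomputable def zeta (ξ η : Measure ℝ) (s : ℝ) : ℝ :=
  if 0 ≤ s then
    s + (atomicPart ξ (Set.Ico 0 s)).toReal + (atomicPart η (Set.Ico 0 s)).toReal
  else
    s - (atomicPart ξ (Set.Ico s 0)).toReal - (atomicPart η (Set.Ico s 0)).toReal

/-- The stretched measure `μ*` built from `μ` using the time change `ζ` of `(ξ, η)`. -/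
noncomputable def starM (ξ η μ : Measure ℝ) : Measure ℝ :=
  (diffusePart μ).map (zeta ξ η) +
    (atomicPart μ).bind fun t =>
      (μ {t})⁻¹ • volume.restrict (Set.Icc (zeta ξ η t) (zeta ξ η t + (μ {t}).toReal))

/-- The shift `θ_s μ := μ(· + s)` of a measure on `ℝ`. -/
noncomputable def shiftM (s : ℝ) (μ : Measure ℝ) : Measure ℝ :=
  μ.map fun x => x - s

/-- `S₁ := 1 + ξ^d[0,1) + η^d[0,1)`. -/
noncomputable def Sone (ξ η : Measure ℝ) : ℝ :=
  1 + (atomicPart ξ (Set.Ico 0 1)).toReal + (atomicPart η (Set.Ico 0 1)).toReal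

namespace StarAux

open scoped Classical

noncomputable def aFun (μ : Measure ℝ) (s : ℝ) : ℝ :=
  if 0 ≤ s then (atomicPart μ (Set.Ico 0 s)).toReal
  else -(atomicPart μ (Set.Ico s 0)).toReal

lemma zeta_eq_aFun (ξ η : Measure ℝ) (s : ℝ) :
    zeta ξ η s = s + aFun ξ s + aFun η s := by
  unfold zeta aFun; split <;> ring

lemma hTmeas : Measurable fun x : ℝ => x - (1 : ℝ) := measurable_id.sub measurable_const

lemma apart_fin (μ : Measure ℝ) (h : ∀ a b : ℝ, μ (Set.Icc a b) ≠ ⊤) :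
    ∀ a b : ℝ, atomicPart μ (Set.Ico a b) ≠ ⊤ := by
  intro a b
  have h1 : atomicPart μ (Set.Ico a b) ≤ μ (Set.Icc a b) := by
    rw [atomicPart, Measure.restrict_apply measurableSet_Ico]
    exact measure_mono (Set.inter_subset_left.trans Set.Ico_subset_Icc_self)
  exact fun ht => h a b (top_le_iff.1 (ht ▸ h1))

lemma meas_Ico_add (ν : Measure ℝ) (hfin : ∀ a b : ℝ, ν (Set.Ico a b) ≠ ⊤)
    {a b c : ℝ} (hab : a ≤ b) (hbc : b ≤ c) :
    (ν (Set.Ico a c)).toReal = (ν (Set.Ico a b)).toReal + (ν (Set.Ico b c)).toReal := by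
  rw [← ENNReal.toReal_add (hfin a b) (hfin b c),
    ← measure_union (Set.Ico_disjoint_Ico_same) measurableSet_Ico,
    Set.Ico_union_Ico_eq_Ico hab hbc]

lemma aFun_diff (μ : Measure ℝ) (hfin : ∀ a b : ℝ, atomicPart μ (Set.Ico a b) ≠ ⊤)
    {a b : ℝ} (hab : a ≤ b) :
    aFun μ b - aFun μ a = (atomicPart μ (Set.Ico a b)).toReal := by
  unfold aFun
  rcases le_or_gt 0 a with ha | ha
  · rw [if_pos (ha.trans hab), if_pos ha]
    have := meas_Ico_add (atomicPart μ) hfin ha hab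
    linarith
  · rcases le_or_gt 0 b with hb | hb
    · rw [if_pos hb, if_neg (not_le.2 ha)]
      have := meas_Ico_add (atomicPart μ) hfin ha.le hb
      linarith
    · rw [if_neg (not_le.2 hb), if_neg (not_le.2 ha)]
      have := meas_Ico_add (atomicPart μ) hfin hab hb.le
      linarith

lemma zeta_mono (ξ η : Measure ℝ) (hξ : ∀ a b : ℝ, atomicPart ξ (Set.Ico a b) ≠ ⊤)
    (hη : ∀ a b : ℝ, atomicPart η (Set.Ico a b) ≠ ⊤) : Monotone (zeta ξ η) := by
  intro a b hab
  rw [zeta_eq_aFun, zeta_eq_aFun]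
  have h1 := aFun_diff ξ hξ hab
  have h2 := aFun_diff η hη hab
  have := ENNReal.toReal_nonneg (a := atomicPart ξ (Set.Ico a b))
  have := ENNReal.toReal_nonneg (a := atomicPart η (Set.Ico a b))
  linarith

lemma countable_atoms (μ : Measure ℝ) (h : ∀ a b : ℝ, μ (Set.Icc a b) ≠ ⊤) :
    Set.Countable {t : ℝ | μ {t} ≠ 0} := by
  haveI : SigmaFinite μ := by
    refine ⟨⟨⟨fun n => Set.Icc (-(n : ℝ)) n, fun _ => trivial,
      fun n => lt_top_iff_ne_top.2 (h _ _), ?_⟩⟩⟩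
    refine Set.eq_univ_of_forall fun x => Set.mem_iUnion.2 ⟨⌈|x|⌉₊, ?_⟩
    have h1 : |x| ≤ (⌈|x|⌉₊ : ℝ) := Nat.le_ceil _
    have h2 := neg_abs_le x
    have h3 := le_abs_self x
    exact Set.mem_Icc.2 ⟨by linarith, by linarith⟩
  have := Measure.countable_meas_pos_of_disjoint_iUnion (μ := μ)
    (As := fun t : ℝ => {t}) (fun t => measurableSet_singleton t)
    (fun a b hab => Set.disjoint_singleton.2 hab)
  refine this.mono fun t ht => ?_
  exact pos_iff_ne_zero.2 ht

lemma map_singleton (μ : Measure ℝ) (t : ℝ) :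
    (μ.map fun x => x - 1) {t} = μ {t + 1} := by
  rw [Measure.map_apply hTmeas (measurableSet_singleton t)]
  congr 1
  ext x
  simp [sub_eq_iff_eq_add]

lemma atomicPart_map (μ : Measure ℝ) (hc : Set.Countable {t : ℝ | μ {t} ≠ 0}) :
    atomicPart (μ.map fun x => x - 1) = (atomicPart μ).map fun x => x - 1 := by
  have hS' : MeasurableSet {t : ℝ | (μ.map fun x => x - 1) {t} ≠ 0} := by
    have : {t : ℝ | (μ.map fun x => x - 1) {t} ≠ 0}
        = (fun t : ℝ => t + 1) ⁻¹' {t : ℝ | μ {t} ≠ 0} := by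
      ext t; simp [map_singleton]
    rw [this]
    exact (measurable_id.add measurable_const) hc.measurableSet
  have hpre : (fun x : ℝ => x - 1) ⁻¹' {t : ℝ | (μ.map fun x => x - 1) {t} ≠ 0}
      = {t : ℝ | μ {t} ≠ 0} := by
    ext x
    have hx : x - 1 + 1 = x := by ring
    simp [map_singleton, hx]
  rw [atomicPart, Measure.restrict_map hTmeas hS', hpre, atomicPart]

lemma diffusePart_map (μ : Measure ℝ) (hc : Set.Countable {t : ℝ | μ {t} ≠ 0}) :
    diffusePart (μ.map fun x => x - 1) = (diffusePart μ).map fun x => x - 1 := by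
  have hS' : MeasurableSet {t : ℝ | (μ.map fun x => x - 1) {t} = 0} := by
    have : {t : ℝ | (μ.map fun x => x - 1) {t} = 0}
        = (fun t : ℝ => t + 1) ⁻¹' {t : ℝ | μ {t} ≠ 0}ᶜ := by
      ext t; simp [map_singleton]
    rw [this]
    exact (measurable_id.add measurable_const) hc.measurableSet.compl
  have hpre : (fun x : ℝ => x - 1) ⁻¹' {t : ℝ | (μ.map fun x => x - 1) {t} = 0}
      = {t : ℝ | μ {t} = 0} := by
    ext x
    have hx : x - 1 + 1 = x := by ring
    simp [map_singleton, hx]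
  rw [diffusePart, Measure.restrict_map hTmeas hS', hpre, diffusePart]

lemma aFun_map (μ : Measure ℝ) (hc : Set.Countable {t : ℝ | μ {t} ≠ 0})
    (hfin : ∀ a b : ℝ, atomicPart μ (Set.Ico a b) ≠ ⊤) (s : ℝ) :
    aFun (μ.map fun x => x - 1) s = aFun μ (s + 1) - aFun μ 1 := by
  have hap : ∀ u v : ℝ, atomicPart (μ.map fun x => x - 1) (Set.Ico u v)
      = atomicPart μ (Set.Ico (u + 1) (v + 1)) := by
    intro u v
    rw [atomicPart_map μ hc, Measure.map_apply hTmeas measurableSet_Ico]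
    congr 1
    ext x
    simp only [Set.mem_preimage, Set.mem_Ico]
    constructor <;> (rintro ⟨h1, h2⟩; constructor <;> linarith)
  rcases le_or_gt 0 s with hs | hs
  · have h := aFun_diff μ hfin (a := 1) (b := s + 1) (by linarith)
    have hL : aFun (μ.map fun x => x - 1) s
        = ((atomicPart μ) (Set.Ico 1 (s + 1))).toReal := by
      rw [aFun, if_pos hs, hap]
      norm_num
    rw [hL]
    linarith
  · have h := aFun_diff μ hfin (a := s + 1) (b := 1) (by linarith)
    have hL : aFun (μ.map fun x => x - 1) s
        = -((atomicPart μ) (Set.Ico (s + 1) 1)).toReal := by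
      rw [aFun, if_neg (not_le.2 hs), hap]
      norm_num
    rw [hL]
    linarith

lemma Sone_eq (ξ η : Measure ℝ) : Sone ξ η = 1 + aFun ξ 1 + aFun η 1 := by
  unfold Sone aFun
  rw [if_pos (zero_le_one), if_pos (zero_le_one)]

lemma zeta_map (ξ η : Measure ℝ)
    (hcξ : Set.Countable {t : ℝ | ξ {t} ≠ 0}) (hcη : Set.Countable {t : ℝ | η {t} ≠ 0})
    (hfξ : ∀ a b : ℝ, atomicPart ξ (Set.Ico a b) ≠ ⊤)
    (hfη : ∀ a b : ℝ, atomicPart η (Set.Ico a b) ≠ ⊤) (s : ℝ) :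
    zeta (ξ.map fun x => x - 1) (η.map fun x => x - 1) s = zeta ξ η (s + 1) - Sone ξ η := by
  rw [zeta_eq_aFun, zeta_eq_aFun, aFun_map ξ hcξ hfξ, aFun_map η hcη hfη, Sone_eq]
  ring

lemma measurable_extend {β : Type*} [MeasurableSpace β] (f : ℝ → β) (b₀ : β)
    {S : Set ℝ} [DecidablePred (· ∈ S)] (hS : S.Countable) :
    Measurable fun t => if t ∈ S then f t else b₀ := by
  intro B hB
  by_cases hb : b₀ ∈ B
  · have : (fun t => if t ∈ S then f t else b₀) ⁻¹' B = (S ∩ f ⁻¹' B) ∪ Sᶜ := by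
      ext t; by_cases ht : t ∈ S <;> simp [ht, hb]
    rw [this]
    exact ((hS.mono Set.inter_subset_left).measurableSet).union hS.measurableSet.compl
  · have : (fun t => if t ∈ S then f t else b₀) ⁻¹' B = S ∩ f ⁻¹' B := by
      ext t; by_cases ht : t ∈ S <;> simp [ht, hb]
    rw [this]
    exact (hS.mono Set.inter_subset_left).measurableSet

lemma bind_congr_ae {m : Measure ℝ} {f g : ℝ → Measure ℝ} (h : f =ᵐ[m] g) :
    m.bind f = m.bind g := by
  unfold Measure.bind
  rw [Measure.map_congr h]

noncomputable def eT : ℝ ≃ᵐ ℝ where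
  toEquiv :=
    { toFun := fun x => x - 1
      invFun := fun x => x + 1
      left_inv := fun x => by ring
      right_inv := fun x => by ring }
  measurable_toFun := hTmeas
  measurable_invFun := measurable_id.add measurable_const

lemma lintegral_map_subone (m : Measure ℝ) (F : ℝ → ENNReal) :
    ∫⁻ a, F a ∂(m.map fun x => x - 1) = ∫⁻ a, F (a - 1) ∂m :=
  lintegral_map_equiv F eT

lemma map_Icc_fin (μ : Measure ℝ) (h : ∀ a b : ℝ, μ (Set.Icc a b) ≠ ⊤) :
    ∀ a b : ℝ, (μ.map fun x => x - 1) (Set.Icc a b) ≠ ⊤ := by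
  intro a b
  rw [Measure.map_apply hTmeas measurableSet_Icc]
  have : (fun x : ℝ => x - 1) ⁻¹' Set.Icc a b = Set.Icc (a + 1) (b + 1) := by
    ext x
    simp only [Set.mem_preimage, Set.mem_Icc]
    constructor <;> (rintro ⟨h1, h2⟩; constructor <;> linarith)
  rw [this]
  exact h _ _

lemma starM_shift (ξ η μ : Measure ℝ)
    (hξ : ∀ a b : ℝ, ξ (Set.Icc a b) ≠ ⊤) (hη : ∀ a b : ℝ, η (Set.Icc a b) ≠ ⊤)
    (hμ : ∀ a b : ℝ, μ (Set.Icc a b) ≠ ⊤) :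
    starM (ξ.map fun x => x - 1) (η.map fun x => x - 1) (μ.map fun x => x - 1)
      = shiftM (Sone ξ η) (starM ξ η μ) := by
  set c := Sone ξ η with hc
  set T : ℝ → ℝ := fun x => x - 1 with hTdef
  have hξf := apart_fin ξ hξ
  have hηf := apart_fin η hη
  have hcξ := countable_atoms ξ hξ
  have hcη := countable_atoms η hη
  have hcμ := countable_atoms μ hμ
  have hξ' := map_Icc_fin ξ hξ
  have hη' := map_Icc_fin η hη
  have hμ' := map_Icc_fin μ hμ
  have hcμ' := countable_atoms (μ.map T) hμ'
  have hζ : Measurable (zeta ξ η) := (zeta_mono ξ η hξf hηf).measurable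
  have hζ' : Measurable (zeta (ξ.map T) (η.map T)) :=
    (zeta_mono _ _ (apart_fin _ hξ') (apart_fin _ hη')).measurable
  have hz : ∀ s : ℝ, zeta (ξ.map T) (η.map T) s = zeta ξ η (s + 1) - c :=
    zeta_map ξ η hcξ hcη hξf hηf
  have hsubc : Measurable fun x : ℝ => x - c := measurable_id.sub measurable_const
  ext A hA
  rw [shiftM, Measure.map_apply hsubc hA]
  set V := (fun x : ℝ => x - c) ⁻¹' A with hVdef
  have hV : MeasurableSet V := hsubc hA
  rw [starM, starM, Measure.add_apply, Measure.add_apply]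
  congr 1
  · -- diffuse parts
    rw [diffusePart_map μ hcμ, Measure.map_map hζ' hTmeas,
      Measure.map_apply (hζ'.comp hTmeas) hA, Measure.map_apply hζ hV]
    congr 1
    ext x
    have hx : x - 1 + 1 = x := by ring
    simp only [Set.mem_preimage, Function.comp_apply, hVdef]
    rw [show zeta (ξ.map T) (η.map T) (T x) = zeta ξ η x - c by rw [hz (T x)]; simp [hTdef, hx]]
  · -- atomic parts
    set S : Set ℝ := {t : ℝ | μ {t} ≠ 0} with hSdef
    set S' : Set ℝ := {t : ℝ | (μ.map T) {t} ≠ 0} with hS'def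
    have hms : ∀ u : ℝ, (μ.map T) {u} = μ {u + 1} := fun u => map_singleton μ u
    set k : ℝ → Measure ℝ := fun t =>
      (μ {t})⁻¹ • volume.restrict (Set.Icc (zeta ξ η t) (zeta ξ η t + (μ {t}).toReal)) with hkdef
    set k' : ℝ → Measure ℝ := fun t =>
      ((μ.map T) {t})⁻¹ • volume.restrict
        (Set.Icc (zeta (ξ.map T) (η.map T) t)
          (zeta (ξ.map T) (η.map T) t + ((μ.map T) {t}).toReal)) with hk'def
    set g : ℝ → Measure ℝ := fun t => if t ∈ S then k t else 0 with hgdef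
    set g' : ℝ → Measure ℝ := fun t => if t ∈ S' then k' t else 0 with hg'def
    have hgmeas : Measurable g := measurable_extend k 0 hcμ
    have hg'meas : Measurable g' := measurable_extend k' 0 hcμ'
    have hkg : k =ᵐ[atomicPart μ] g := by
      have hae : ∀ᵐ t ∂(atomicPart μ), t ∈ S := ae_restrict_mem hcμ.measurableSet
      filter_upwards [hae] with t ht
      exact (if_pos ht).symm
    have hk'g' : k' =ᵐ[atomicPart (μ.map T)] g' := by
      have hae : ∀ᵐ t ∂(atomicPart (μ.map T)), t ∈ S' := ae_restrict_mem hcμ'.measurableSet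
      filter_upwards [hae] with t ht
      exact (if_pos ht).symm
    rw [bind_congr_ae hkg, bind_congr_ae hk'g',
      Measure.bind_apply hA hg'meas.aemeasurable, Measure.bind_apply hV hgmeas.aemeasurable,
      atomicPart_map μ hcμ]
    rw [show Measure.map T (atomicPart μ) = (atomicPart μ).map fun x => x - 1 from rfl,
      lintegral_map_subone (atomicPart μ) (fun t => g' t A)]
    refine lintegral_congr_ae ?_
    have hae : ∀ᵐ t ∂(atomicPart μ), t ∈ S := ae_restrict_mem hcμ.measurableSet
    filter_upwards [hae] with t ht
    have hts : t - 1 + 1 = t := by ring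
    have hμval : (μ.map T) {t - 1} = μ {t} := by rw [hms, hts]
    have hmemS' : t - 1 ∈ S' := by
      show (μ.map T) {t - 1} ≠ 0
      rw [hμval]
      exact ht
    have hzval : zeta (ξ.map T) (η.map T) (t - 1) = zeta ξ η t - c := by
      rw [hz (t - 1), hts]
    have h1 : g' (t - 1) = k' (t - 1) := if_pos hmemS'
    have h2 : g t = k t := if_pos ht
    rw [h1, h2]
    have h3 : k' (t - 1) = (μ {t})⁻¹ • volume.restrict
        (Set.Icc (zeta ξ η t - c) (zeta ξ η t - c + (μ {t}).toReal)) := by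
      rw [hk'def]
      simp only []
      rw [hμval, hzval]
    have h4 : k t = (μ {t})⁻¹ • volume.restrict
        (Set.Icc (zeta ξ η t) (zeta ξ η t + (μ {t}).toReal)) := rfl
    rw [h3, h4, Measure.smul_apply, Measure.smul_apply,
      Measure.restrict_apply hA, Measure.restrict_apply hV]
    congr 1
    have hset : V ∩ Set.Icc (zeta ξ η t) (zeta ξ η t + (μ {t}).toReal)
        = (fun x : ℝ => x - c) ⁻¹'
          (A ∩ Set.Icc (zeta ξ η t - c) (zeta ξ η t - c + (μ {t}).toReal)) := by
      ext x
      simp only [hVdef, Set.mem_inter_iff, Set.mem_preimage, Set.mem_Icc]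
      constructor
      · rintro ⟨h1, h2, h3⟩; exact ⟨h1, by linarith, by linarith⟩
      · rintro ⟨h1, h2, h3⟩; exact ⟨h1, by linarith, by linarith⟩
    rw [hset, show (fun x : ℝ => x - c) = fun x : ℝ => x + (-c) by ext x; ring,
      measure_preimage_add_right]

end StarAux

/-- For invariant random measures `ξ`, `η`, the pair `θ_{S₁}(ξ*, η*)` has the same
distribution under `P` as `(ξ*, η*)`. -/
theorem star_pair_shift_Sone_eq_distrib
    { Omega : Type*} [MeasurableSpace Omega] (P : Measure Omega) [SigmaFinite P]
    (θ : ℝ → Omega → Omega)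
    (hθmeas : Measurable fun p : Omega × ℝ => θ p.2 p.1)
    (hθzero : ∀ ω, θ 0 ω = ω)
    (hθadd : ∀ s t : ℝ, ∀ ω, θ s (θ t ω) = θ (s + t) ω)
    (hstat : ∀ s : ℝ, P.map (θ s) = P)
    (herg : ∀ A : Set Omega, MeasurableSet A → (∀ s : ℝ, θ s '' A = A) → P A = 0 ∨ P Aᶜ = 0)
    (ξ η : Omega → Measure ℝ) (hξmeas : Measurable ξ) (hηmeas : Measurable η)
    (hξloc : ∀ᵐ ω ∂P, ∀ C : Set ℝ, IsCompact C → ξ ω C < ⊤)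
    (hηloc : ∀ᵐ ω ∂P, ∀ C : Set ℝ, IsCompact C → η ω C < ⊤)
    (hξinv : ∀ᵐ ω ∂P, ∀ t : ℝ, ξ (θ t ω) = (ξ ω).map fun x => x - t)
    (hηinv : ∀ᵐ ω ∂P, ∀ t : ℝ, η (θ t ω) = (η ω).map fun x => x - t) :
    ∀ f : Measure ℝ × Measure ℝ → ENNReal, Measurable f →
      ∫⁻ ω, f (shiftM (Sone (ξ ω) (η ω)) (starM (ξ ω) (η ω) (ξ ω)),
               shiftM (Sone (ξ ω) (η ω)) (starM (ξ ω) (η ω) (η ω))) ∂P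
        = ∫⁻ ω, f (starM (ξ ω) (η ω) (ξ ω), starM (ξ ω) (η ω) (η ω)) ∂P := by
  intro f hf
  have hθ1 : Measurable (θ 1) :=
    hθmeas.comp (measurable_id.prodMk measurable_const)
  have hθm1 : Measurable (θ (-1)) :=
    hθmeas.comp (measurable_id.prodMk measurable_const)
  let e1 : Omega ≃ᵐ Omega :=
    { toEquiv :=
        { toFun := θ 1
          invFun := θ (-1)
          left_inv := fun ω => by
            rw [hθadd, show (-1 : ℝ) + 1 = 0 by norm_num, hθzero]
          right_inv := fun ω => by
            rw [hθadd, show (1 : ℝ) + -1 = 0 by norm_num, hθzero] }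
      measurable_toFun := hθ1
      measurable_invFun := hθm1 }
  set F : Omega → ENNReal :=
    fun ω => f (starM (ξ ω) (η ω) (ξ ω), starM (ξ ω) (η ω) (η ω)) with hFdef
  have hmape : Measure.map (⇑e1) P = P := by
    rw [show (⇑e1) = θ 1 from rfl]
    exact hstat 1
  have key : ∫⁻ ω, F (θ 1 ω) ∂P = ∫⁻ ω, F ω ∂P := by
    calc ∫⁻ ω, F (θ 1 ω) ∂P = ∫⁻ a, F a ∂(Measure.map (⇑e1) P) :=
          (lintegral_map_equiv F e1).symm
      _ = ∫⁻ ω, F ω ∂P := by rw [hmape]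
  rw [← key]
  refine lintegral_congr_ae ?_
  filter_upwards [hξloc, hηloc, hξinv, hηinv] with ω h1 h2 h3 h4
  have hξfin : ∀ a b : ℝ, ξ ω (Set.Icc a b) ≠ ⊤ := fun a b => (h1 _ isCompact_Icc).ne
  have hηfin : ∀ a b : ℝ, η ω (Set.Icc a b) ≠ ⊤ := fun a b => (h2 _ isCompact_Icc).ne
  simp only [hFdef]
  rw [h3 1, h4 1,
    StarAux.starM_shift (ξ ω) (η ω) (ξ ω) hξfin hηfin hξfin,
    StarAux.starM_shift (ξ ω) (η ω) (η ω) hξfin hηfin hηfin]
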